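/- (Analytic core of the lower-bound lemma.) Let Φ : (0,∞) → ℝ have the Thomas–Fermi potential properties, let λ > 0, and let (χ_k)_{k∈ℕ} be a sequence of non-negative real numbers such that for every μ ≥ 0 and every ε > 0, limsup_{k→∞} ( e_G(λ,μ) − μ·χ_k ) ≤ e_G(λ+ε, 0). Then liminf_{k→∞} χ_k ≥ n(λ,0) = κ(λ). -/

import Mathlib

open MeasureTheory Real Filter Set

/-- The semiclassical grand canonical energy
`e_G(λ,μ) = −(2/(3π)) ∫₀^∞ (Φ(r) − λ²r⁻² − μ)₊^{3/2} dr`. -/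
noncomputable def eG (Φ : ℝ → ℝ) (lam μ : ℝ) : ℝ :=
  -(2 / (3 * π)) * ∫ r in Ioi (0:ℝ), (max (Φ r - lam ^ 2 / r ^ 2 - μ) 0) ^ ((3:ℝ)/2)

/-- The semiclassical counting function
`n(λ,μ) = (1/π) ∫₀^∞ (Φ(r) − λ²r⁻² − μ)₊^{1/2} dr`. -/
noncomputable def nSC (Φ : ℝ → ℝ) (lam μ : ℝ) : ℝ :=
  (1 / π) * ∫ r in Ioi (0:ℝ), (max (Φ r - lam ^ 2 / r ^ 2 - μ) 0) ^ ((1:ℝ)/2)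

/-- `Φ` has the Thomas–Fermi potential properties: continuous and positive on `(0,∞)`,
`r·Φ(r) → 1` as `r → 0+`, and `Φ(r) ≤ C r⁻⁴` for `r ≥ 1`. -/
def HasTF (Φ : ℝ → ℝ) : Prop :=
  ContinuousOn Φ (Ioi 0) ∧ (∀ r, 0 < r → 0 < Φ r) ∧
  Tendsto (fun r => r * Φ r) (nhdsWithin 0 (Ioi 0)) (nhds 1) ∧
  ∃ C, 0 < C ∧ ∀ r, 1 ≤ r → Φ r ≤ C / r ^ 4

/-- analytic core of the lower-bound lemma: if a sequence of non-negative
reals `χ_k` satisfies `limsup_k (e_G(λ,μ) − μχ_k) ≤ e_G(λ+ε,0)` for all `μ ≥ 0` and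
`ε > 0`, then `liminf_k χ_k ≥ n(λ,0) = κ(λ)` (liminf taken in `EReal`). -/

noncomputable def integ (Φ : ℝ → ℝ) (l μ p : ℝ) : ℝ → ℝ :=
  fun r => (max (Φ r - l ^ 2 / r ^ 2 - μ) 0) ^ p

lemma max_sub_max (x μ : ℝ) (hμ : 0 ≤ μ) : max (x - μ) 0 = max (max x 0 - μ) 0 := by
  rcases le_total x 0 with hx | hx
  · rw [max_eq_right hx, max_eq_right (by linarith : x - μ ≤ 0),
      max_eq_right (by linarith : (0:ℝ) - μ ≤ 0)]
  · rw [max_eq_left hx]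

lemma rpow_three_halves (a : ℝ) (ha : 0 ≤ a) :
    a ^ ((3:ℝ)/2) = (a ^ ((1:ℝ)/2)) ^ (3:ℕ) := by
  rw [← Real.rpow_natCast (a ^ ((1:ℝ)/2)) 3, ← Real.rpow_mul ha]
  norm_num

lemma rpow_half_sq (a : ℝ) (ha : 0 ≤ a) : (a ^ ((1:ℝ)/2)) ^ (2:ℕ) = a := by
  rw [← Real.rpow_natCast (a ^ ((1:ℝ)/2)) 2, ← Real.rpow_mul ha]
  norm_num

lemma key_alg (a μ : ℝ) (ha : 0 ≤ a) (hμ : 0 ≤ μ) :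
    3/2 * μ * (max (a - μ) 0) ^ ((1:ℝ)/2)
      ≤ a ^ ((3:ℝ)/2) - (max (a - μ) 0) ^ ((3:ℝ)/2) := by
  set b := max (a - μ) 0 with hb
  have hb0 : 0 ≤ b := le_max_right _ _
  rcases le_total (a - μ) 0 with hc | hc
  · have hb' : b = 0 := max_eq_right hc
    rw [hb', Real.zero_rpow (by norm_num), Real.zero_rpow (by norm_num)]
    simp [Real.rpow_nonneg ha]
  · have hb' : b = a - μ := max_eq_left hc
    set s := a ^ ((1:ℝ)/2) with hs
    set t := b ^ ((1:ℝ)/2) with ht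
    have hs0 : 0 ≤ s := Real.rpow_nonneg ha _
    have ht0 : 0 ≤ t := Real.rpow_nonneg hb0 _
    have hs2 : s ^ (2:ℕ) = a := rpow_half_sq a ha
    have ht2 : t ^ (2:ℕ) = b := rpow_half_sq b hb0
    rw [rpow_three_halves a ha, rpow_three_halves b hb0, ← hs, ← ht]
    have key : 0 ≤ (s - t)^2 * (s + t/2) := by positivity
    nlinarith [key, hs2, ht2, hb']

lemma integ_nonneg (Φ : ℝ → ℝ) (l μ p r : ℝ) : 0 ≤ integ Φ l μ p r :=
  Real.rpow_nonneg (le_max_right _ _) _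

lemma integ_contOn {Φ : ℝ → ℝ} (hc : ContinuousOn Φ (Ioi 0)) (l μ p : ℝ) (hp : 0 ≤ p) :
    ContinuousOn (integ Φ l μ p) (Ioi 0) := by
  apply ContinuousOn.rpow_const
  · exact (continuous_id.max continuous_const).comp_continuousOn
      ((hc.sub ((continuousOn_const.div ((continuous_pow 2).continuousOn)
        (fun x hx => pow_ne_zero 2 (ne_of_gt hx))))).sub continuousOn_const)
  · exact fun x _ => Or.inr hp

lemma integ_meas {Φ : ℝ → ℝ} (hc : ContinuousOn Φ (Ioi 0)) (l μ p : ℝ) (hp : 0 ≤ p) :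
    AEStronglyMeasurable (integ Φ l μ p) (volume.restrict (Ioi 0)) :=
  (integ_contOn hc l μ p hp).aestronglyMeasurable measurableSet_Ioi

lemma integ_mono {Φ : ℝ → ℝ} {lam l μ p r : ℝ} (hlam : 0 ≤ lam) (hl : lam ≤ l)
    (hμ : 0 ≤ μ) (hp : 0 ≤ p) (hr : 0 < r) :
    integ Φ l μ p r ≤ integ Φ lam 0 p r := by
  apply Real.rpow_le_rpow (le_max_right _ _) _ hp
  apply max_le_max _ le_rfl
  have h1 : lam ^ 2 / r ^ 2 ≤ l ^ 2 / r ^ 2 := by gcongr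
  linarith

lemma exists_r0 {Φ : ℝ → ℝ} (htend : Tendsto (fun r => r * Φ r) (nhdsWithin 0 (Ioi 0)) (nhds 1))
    {lam : ℝ} (hlam : 0 < lam) :
    ∃ r0 : ℝ, 0 < r0 ∧ r0 ≤ 1 ∧ ∀ r, 0 < r → r < r0 → Φ r - lam ^ 2 / r ^ 2 ≤ 0 := by
  have h2 : ∀ᶠ r in nhdsWithin 0 (Ioi 0), r * Φ r < 2 :=
    htend (Iio_mem_nhds (by norm_num))
  rw [eventually_nhdsWithin_iff, Metric.eventually_nhds_iff] at h2
  obtain ⟨ε, hε, hev⟩ := h2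
  refine ⟨min ε (min 1 (lam ^ 2 / 2)), by positivity, le_trans (min_le_right _ _) (min_le_left _ _),
    fun r hr hr' => ?_⟩
  have hr1 : r < ε := lt_of_lt_of_le hr' (min_le_left _ _)
  have hr2 : r < lam ^ 2 / 2 := lt_of_lt_of_le hr' (le_trans (min_le_right _ _) (min_le_right _ _))
  have hd : dist r 0 < ε := by rw [Real.dist_eq, sub_zero, abs_of_pos hr]; exact hr1
  have hΦ : r * Φ r < 2 := hev hd hr
  rw [sub_nonpos, le_div_iff₀ (pow_pos hr 2)]
  nlinarith [mul_lt_mul_of_pos_right hΦ hr]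

lemma master_integrable {Φ : ℝ → ℝ} (hc : ContinuousOn Φ (Ioi 0))
    (htend : Tendsto (fun r => r * Φ r) (nhdsWithin 0 (Ioi 0)) (nhds 1))
    {C : ℝ} (hC : 0 < C) (htail : ∀ r, 1 ≤ r → Φ r ≤ C / r ^ 4)
    {lam : ℝ} (hlam : 0 < lam) {p : ℝ} (hp : 0 < p) (hp4 : 1 < 4 * p) :
    IntegrableOn (integ Φ lam 0 p) (Ioi 0) := by
  obtain ⟨r0, hr0, hr01, hvan⟩ := exists_r0 htend hlam
  obtain ⟨M, hM⟩ := (isCompact_Icc : IsCompact (Icc r0 1)).exists_bound_of_continuousOn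
    (hc.mono (fun x hx => lt_of_lt_of_le hr0 hx.1))
  have hM0 : 0 ≤ M := le_trans (norm_nonneg _) (hM r0 ⟨le_refl _, hr01⟩)
  rw [← Ioc_union_Ioi_eq_Ioi (zero_le_one)]
  apply IntegrableOn.union
  · -- bounded on Ioc 0 1
    have hbd : ∀ r ∈ Ioc (0:ℝ) 1, ‖integ Φ lam 0 p r‖ ≤ M ^ p := by
      intro r hr
      rw [Real.norm_of_nonneg (integ_nonneg _ _ _ _ _)]
      rcases lt_or_ge r r0 with hlt | hge
      · have : max (Φ r - lam ^ 2 / r ^ 2 - 0) 0 = 0 :=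
          max_eq_right (by have := hvan r hr.1 hlt; linarith)
        rw [integ, this, Real.zero_rpow (ne_of_gt hp)]
        positivity
      · have hΦr : Φ r ≤ M := le_trans (le_abs_self _) (hM r ⟨hge, hr.2⟩)
        apply Real.rpow_le_rpow (le_max_right _ _) _ (le_of_lt hp)
        apply max_le _ hM0
        have : 0 ≤ lam ^ 2 / r ^ 2 := by positivity
        linarith
    apply Integrable.mono' (g := fun _ : ℝ => M ^ p)
      (integrableOn_const measure_Ioc_lt_top.ne)
      ((integ_meas hc lam 0 p hp.le).mono_measure
        (Measure.restrict_mono Ioc_subset_Ioi_self le_rfl))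
    exact (ae_restrict_iff' measurableSet_Ioc).2 (Eventually.of_forall hbd)
  · -- tail
    have hint : IntegrableOn (fun r : ℝ => C ^ p * r ^ (-(4*p))) (Ioi 1) :=
      (integrableOn_Ioi_rpow_of_lt (by linarith) one_pos).const_mul _
    apply hint.integrable.mono'
    · exact (integ_meas hc lam 0 p hp.le).mono_measure
        (Measure.restrict_mono (Ioi_subset_Ioi zero_le_one) le_rfl)
    · apply (ae_restrict_iff' measurableSet_Ioi).2 (Eventually.of_forall ?_)
      intro r hr
      have hr1 : (1:ℝ) ≤ r := le_of_lt hr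
      have hr0' : (0:ℝ) < r := lt_of_lt_of_le one_pos hr1
      rw [Real.norm_of_nonneg (integ_nonneg _ _ _ _ _)]
      have hmax : max (Φ r - lam ^ 2 / r ^ 2 - 0) 0 ≤ C / r ^ 4 := by
        apply max_le _ (by positivity)
        have h1 := htail r hr1
        have : 0 ≤ lam ^ 2 / r ^ 2 := by positivity
        linarith
      calc integ Φ lam 0 p r ≤ (C / r ^ 4) ^ p :=
            Real.rpow_le_rpow (le_max_right _ _) hmax hp.le
        _ = C ^ p * r ^ (-(4*p)) := by
            rw [Real.div_rpow hC.le (by positivity), ← Real.rpow_natCast r 4,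
              ← Real.rpow_mul hr0'.le, div_eq_mul_inv, ← Real.rpow_neg hr0'.le]
            norm_num

lemma integ_integrable {Φ : ℝ → ℝ} (hc : ContinuousOn Φ (Ioi 0))
    (htend : Tendsto (fun r => r * Φ r) (nhdsWithin 0 (Ioi 0)) (nhds 1))
    {C : ℝ} (hC : 0 < C) (htail : ∀ r, 1 ≤ r → Φ r ≤ C / r ^ 4)
    {lam : ℝ} (hlam : 0 < lam) {l μ : ℝ} (hl : lam ≤ l) (hμ : 0 ≤ μ)
    {p : ℝ} (hp : 0 < p) (hp4 : 1 < 4 * p) :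
    IntegrableOn (integ Φ l μ p) (Ioi 0) := by
  apply (master_integrable hc htend hC htail hlam hp hp4).integrable.mono'
    (integ_meas hc l μ p hp.le)
  apply (ae_restrict_iff' measurableSet_Ioi).2 (Eventually.of_forall ?_)
  intro r hr
  rw [Real.norm_of_nonneg (integ_nonneg _ _ _ _ _)]
  exact integ_mono hlam.le hl hμ hp.le hr

lemma integ_tendsto {Φ : ℝ → ℝ} (hc : ContinuousOn Φ (Ioi 0))
    (htend : Tendsto (fun r => r * Φ r) (nhdsWithin 0 (Ioi 0)) (nhds 1))
    {C : ℝ} (hC : 0 < C) (htail : ∀ r, 1 ≤ r → Φ r ≤ C / r ^ 4)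
    {lam : ℝ} (hlam : 0 < lam) {p : ℝ} (hp : 0 < p) (hp4 : 1 < 4 * p)
    (lseq μseq : ℕ → ℝ) (hlseq : ∀ n, lam ≤ lseq n) (hμseq : ∀ n, 0 ≤ μseq n)
    (hlt : Tendsto lseq atTop (nhds lam)) (hμt : Tendsto μseq atTop (nhds 0)) :
    Tendsto (fun n => ∫ r in Ioi (0:ℝ), integ Φ (lseq n) (μseq n) p r) atTop
      (nhds (∫ r in Ioi (0:ℝ), integ Φ lam 0 p r)) := by
  apply MeasureTheory.tendsto_integral_of_dominated_convergence
    (bound := integ Φ lam 0 p)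
    (fun n => integ_meas hc (lseq n) (μseq n) p hp.le)
    (master_integrable hc htend hC htail hlam hp hp4)
  · intro n
    apply (ae_restrict_iff' measurableSet_Ioi).2 (Eventually.of_forall ?_)
    intro r hr
    rw [Real.norm_of_nonneg (integ_nonneg _ _ _ _ _)]
    exact integ_mono hlam.le (hlseq n) (hμseq n) hp.le hr
  · apply (ae_restrict_iff' measurableSet_Ioi).2 (Eventually.of_forall ?_)
    intro r hr
    have hr2 : (r:ℝ) ^ 2 ≠ 0 := pow_ne_zero 2 (ne_of_gt hr)
    have hcont : ContinuousAt (fun q : ℝ × ℝ =>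
        (max (Φ r - q.1 ^ 2 / r ^ 2 - q.2) 0) ^ p) (lam, 0) := by
      apply ContinuousAt.rpow_const _ (Or.inr hp.le)
      exact (continuous_id.max continuous_const).continuousAt.comp
        (((continuous_const.sub ((continuous_fst.pow 2).div_const (r ^ 2))).sub
          continuous_snd).continuousAt)
    have hq : Tendsto (fun n => (lseq n, μseq n)) atTop (nhds (lam, 0)) :=
      hlt.prodMk_nhds hμt
    exact (hcont.tendsto.comp hq : _)

lemma eG_eq (Φ : ℝ → ℝ) (l μ : ℝ) :
    eG Φ l μ = -(2 / (3 * π)) * ∫ r in Ioi (0:ℝ), integ Φ l μ ((3:ℝ)/2) r := rfl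

lemma nSC_eq (Φ : ℝ → ℝ) (l μ : ℝ) :
    nSC Φ l μ = (1 / π) * ∫ r in Ioi (0:ℝ), integ Φ l μ ((1:ℝ)/2) r := rfl

section core
variable {Φ : ℝ → ℝ} (hc : ContinuousOn Φ (Ioi 0))
  (htend : Tendsto (fun r => r * Φ r) (nhdsWithin 0 (Ioi 0)) (nhds 1))
  {C : ℝ} (hC : 0 < C) (htail : ∀ r, 1 ≤ r → Φ r ≤ C / r ^ 4)
  {lam : ℝ} (hlam : 0 < lam)

include hc htend hC htail hlam

lemma key_integral {μ : ℝ} (hμ : 0 ≤ μ) :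
    3/2 * μ * (∫ r in Ioi (0:ℝ), integ Φ lam μ ((1:ℝ)/2) r)
      ≤ (∫ r in Ioi (0:ℝ), integ Φ lam 0 ((3:ℝ)/2) r)
        - ∫ r in Ioi (0:ℝ), integ Φ lam μ ((3:ℝ)/2) r := by
  have i12 : IntegrableOn (integ Φ lam μ ((1:ℝ)/2)) (Ioi 0) :=
    integ_integrable hc htend hC htail hlam le_rfl hμ (by norm_num) (by norm_num)
  have i320 : IntegrableOn (integ Φ lam 0 ((3:ℝ)/2)) (Ioi 0) :=
    integ_integrable hc htend hC htail hlam le_rfl le_rfl (by norm_num) (by norm_num)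
  have i32μ : IntegrableOn (integ Φ lam μ ((3:ℝ)/2)) (Ioi 0) :=
    integ_integrable hc htend hC htail hlam le_rfl hμ (by norm_num) (by norm_num)
  rw [← MeasureTheory.integral_const_mul, ← MeasureTheory.integral_sub i320 i32μ]
  apply integral_mono (i12.const_mul _) (i320.sub i32μ)
  intro r
  simp only [integ, Pi.sub_apply, sub_zero]
  rw [max_sub_max (Φ r - lam ^ 2 / r ^ 2) μ hμ]
  exact key_alg _ μ (le_max_right _ _) hμ

lemma eG_lower {μ : ℝ} (hμ : 0 ≤ μ) :
    eG Φ lam 0 + μ * nSC Φ lam μ ≤ eG Φ lam μ := by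
  have hk := key_integral hc htend hC htail hlam hμ
  have hπ := Real.pi_pos
  rw [eG_eq, eG_eq, nSC_eq]
  set I0 := ∫ r in Ioi (0:ℝ), integ Φ lam 0 ((3:ℝ)/2) r
  set Iμ := ∫ r in Ioi (0:ℝ), integ Φ lam μ ((3:ℝ)/2) r
  set J := ∫ r in Ioi (0:ℝ), integ Φ lam μ ((1:ℝ)/2) r
  have hc2 : (0:ℝ) ≤ 2 / (3 * π) := by positivity
  have h2 := mul_le_mul_of_nonneg_left hk hc2
  have hid : 2 / (3 * π) * (3/2 * μ * J) = μ * (1/π * J) := by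
    field_simp
  rw [hid, mul_sub] at h2
  linarith

lemma eG_tendsto :
    Tendsto (fun m : ℕ => eG Φ (lam + 1/(m+1)) 0) atTop (nhds (eG Φ lam 0)) := by
  simp only [eG_eq]
  apply Tendsto.const_mul
  apply integ_tendsto hc htend hC htail hlam (by norm_num) (by norm_num)
  · intro n; have : (0:ℝ) < 1/((n:ℝ)+1) := by positivity
    linarith
  · exact fun _ => le_rfl
  · simpa using (tendsto_const_nhds (x := lam)).add tendsto_one_div_add_atTop_nhds_zero_nat
  · exact tendsto_const_nhds

lemma nSC_tendsto :
    Tendsto (fun m : ℕ => nSC Φ lam (1/(m+1))) atTop (nhds (nSC Φ lam 0)) := by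
  simp only [nSC_eq]
  apply Tendsto.const_mul
  apply integ_tendsto hc htend hC htail hlam (by norm_num) (by norm_num)
  · exact fun _ => le_rfl
  · intro n; positivity
  · exact tendsto_const_nhds
  · exact tendsto_one_div_add_atTop_nhds_zero_nat

end core

theorem liminf_ge_kappa (Φ : ℝ → ℝ) (hΦ : HasTF Φ) (lam : ℝ) (hlam : 0 < lam)
    (χ : ℕ → ℝ) (hχ : ∀ k, 0 ≤ χ k)
    (h : ∀ μ : ℝ, 0 ≤ μ → ∀ ε : ℝ, 0 < ε →
      Filter.limsup (fun k => ((eG Φ lam μ - μ * χ k : ℝ) : EReal)) atTop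
        ≤ ((eG Φ (lam + ε) 0 : ℝ) : EReal)) :
    ((nSC Φ lam 0 : ℝ) : EReal) ≤ Filter.liminf (fun k => ((χ k : ℝ) : EReal)) atTop := by
  obtain ⟨hc, hpos, htend, C, hC, htail⟩ := hΦ
  have hA := eG_tendsto hc htend hC htail hlam
  have hB := nSC_tendsto hc htend hC htail hlam
  have main : ∀ a : ℝ, a < nSC Φ lam 0 →
      (a : EReal) ≤ Filter.liminf (fun k => ((χ k : ℝ) : EReal)) atTop := by
    intro a ha
    set a' := (a + nSC Φ lam 0) / 2 with ha'def
    have ha1 : a < a' := by rw [ha'def]; linarith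
    have ha2 : a' < nSC Φ lam 0 := by rw [ha'def]; linarith
    obtain ⟨m, hm⟩ := (hB.eventually (eventually_gt_nhds ha2)).exists
    set μ := 1/((m:ℝ)+1) with hμdef
    have hμ : 0 < μ := by positivity
    set δ := μ * (a' - a) with hδdef
    have hδ : 0 < δ := mul_pos hμ (by linarith)
    obtain ⟨m', hm'⟩ := (hA.eventually (eventually_lt_nhds
      (show eG Φ lam 0 < eG Φ lam 0 + δ by linarith))).exists
    set ε := 1/((m':ℝ)+1) with hεdef
    have hε : 0 < ε := by positivity
    have hlow := eG_lower hc htend hC htail hlam hμ.le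
    have hkey : eG Φ (lam + ε) 0 < eG Φ lam μ - μ * a := by
      have hmul : μ * a' < μ * nSC Φ lam μ := by
        apply mul_lt_mul_of_pos_left hm hμ
      have : μ * a' = δ + μ * a := by rw [hδdef]; ring
      linarith
    have hls := h μ hμ.le ε hε
    have hlt : Filter.limsup (fun k => ((eG Φ lam μ - μ * χ k : ℝ) : EReal)) atTop
        < ((eG Φ lam μ - μ * a : ℝ) : EReal) :=
      lt_of_le_of_lt hls (EReal.coe_lt_coe_iff.mpr hkey)
    have hev := eventually_lt_of_limsup_lt hlt
    apply le_liminf_of_le (by isBoundedDefault)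
    apply hev.mono
    intro k hk
    have hk' : eG Φ lam μ - μ * χ k < eG Φ lam μ - μ * a := EReal.coe_lt_coe_iff.mp hk
    have : μ * a < μ * χ k := by linarith
    have hak : a < χ k := lt_of_mul_lt_mul_left this hμ.le
    exact EReal.coe_le_coe_iff.mpr hak.le
  by_contra hcon
  push_neg at hcon
  obtain ⟨a, ha1, ha2⟩ := EReal.lt_iff_exists_real_btwn.mp hcon
  exact absurd (main a (EReal.coe_lt_coe_iff.mp ha2)) (not_le.mpr ha1)
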